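/- For complex numbers x₁, x₂ with Re(x₁) > 0 and Re(x₂) > 0, and positive real numbers m, n, one has (1/(m^{x₁} n^{x₂})) ∫_{-∞}^{∞} m^{-it} n^{it} Γ(x₁ + it) Γ(x₂ - it) dt = 2π Γ(x₁ + x₂) / (m+n)^{x₁+x₂}. -/

import Mathlib

open Complex Real
open MeasureTheory Set

-- Lemma A: mellin of exp
lemma mellin_rexp (s : ℂ) (hs : 0 < s.re) :
    mellin (fun u : ℝ => (Real.exp (-u) : ℂ)) s = Complex.Gamma s := by
  rw [Complex.Gamma_eq_integral hs, Complex.GammaIntegral, mellin]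
  refine setIntegral_congr_fun measurableSet_Ioi fun t ht => ?_
  rw [smul_eq_mul, mul_comm]


lemma mellinConvergent_rexp (s : ℂ) (hs : 0 < s.re) :
    MellinConvergent (fun u : ℝ => (Real.exp (-u) : ℂ)) s := by
  have := Complex.GammaIntegral_convergent hs
  refine this.congr_fun (fun t ht => ?_) measurableSet_Ioi
  rw [smul_eq_mul, mul_comm]


lemma mellin_rexp_mul (a : ℝ) (ha : 0 < a) (s : ℂ) (hs : 0 < s.re) :
    mellin (fun u : ℝ => (Real.exp (-(a * u)) : ℂ)) s
      = (a : ℂ) ^ (-s) * Complex.Gamma s := by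
  have := mellin_comp_mul_left (fun u : ℝ => (Real.exp (-u) : ℂ)) s ha
  simp only [smul_eq_mul] at this
  rw [← mellin_rexp s hs, ← this]

lemma mellinConvergent_rexp_mul (a : ℝ) (ha : 0 < a) (s : ℂ) (hs : 0 < s.re) :
    MellinConvergent (fun u : ℝ => (Real.exp (-(a * u)) : ℂ)) s :=
  (MellinConvergent.comp_mul_left ha (f := fun u : ℝ => (Real.exp (-u) : ℂ))).mpr
    (mellinConvergent_rexp s hs)
open Complex Real MeasureTheory Set

lemma norm_Gamma_le (s : ℂ) (hs : 0 < s.re) : ‖Complex.Gamma s‖ ≤ Real.Gamma s.re := by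
  rw [Complex.Gamma_eq_integral hs, Complex.GammaIntegral,
    Real.Gamma_eq_integral hs]
  refine (norm_integral_le_integral_norm _).trans_eq ?_
  refine setIntegral_congr_fun measurableSet_Ioi fun t ht => ?_
  rw [norm_mul,
    Complex.norm_cpow_eq_rpow_re_of_pos ht,
    Complex.norm_of_nonneg (Real.exp_pos _).le]
  simp

lemma gamma_vert_cont (z : ℂ) (hσ : 0 < z.re) :
    Continuous (fun y : ℝ => Complex.Gamma (z + y * Complex.I)) := by
  have hne : ∀ y : ℝ, ∀ k : ℕ, (z + y * Complex.I) ≠ -k := by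
    intro y k h
    have : (z + y * Complex.I).re = (-(k:ℂ)).re := by rw [h]
    simp at this
    linarith [this, (Nat.cast_nonneg k : (0:ℝ) ≤ k)]
  refine continuous_iff_continuousAt.mpr fun y => ?_
  have h1 : ContinuousAt (fun y : ℝ => z + y * Complex.I) y := by fun_prop
  exact ContinuousAt.comp (x := y) (g := Complex.Gamma)
    ((Complex.differentiableAt_Gamma _ (hne y)).continuousAt) h1

lemma gamma_vert_integrable {σ : ℝ} (hσ : 0 < σ) :
    Integrable (fun y : ℝ => Complex.Gamma (σ + y * Complex.I)) := by
  have hcont := gamma_vert_cont (σ : ℂ) (by simpa using hσ)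
  obtain ⟨K, hK⟩ := (isCompact_Icc (a := (-1:ℝ)) (b := 1)).exists_bound_of_continuousOn
    hcont.continuousOn
  set C : ℝ := Real.Gamma (σ + 2) with hC
  have key : ∀ y : ℝ, 1 ≤ |y| → ‖Complex.Gamma ((σ:ℂ) + y * Complex.I)‖ ≤ C / y ^ 2 := by
    intro y hy
    set s : ℂ := (σ:ℂ) + y * Complex.I with hsdef
    have hsre : s.re = σ := by simp [hsdef]
    have hs0 : s ≠ 0 := fun h => by rw [h] at hsre; simp at hsre; linarith
    have hs1 : s + 1 ≠ 0 := fun h => by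
      have : (s + 1).re = 0 := by rw [h]; simp
      rw [Complex.add_re, hsre, Complex.one_re] at this; linarith
    have h2 : Complex.Gamma (s + 1 + 1) = (s + 1) * (s * Complex.Gamma s) := by
      rw [Complex.Gamma_add_one _ hs1, Complex.Gamma_add_one s hs0]
    have hsabs : |y| ≤ ‖s‖ := by
      have : |s.im| = |y| := by simp [hsdef]
      exact this ▸ Complex.abs_im_le_norm s
    have hs1abs : |y| ≤ ‖s + 1‖ := by
      have : |(s+1).im| = |y| := by simp [hsdef]
      exact this ▸ Complex.abs_im_le_norm (s + 1)
    have hnorm2 : ‖s + 1‖ * (‖s‖ * ‖Complex.Gamma s‖) ≤ C := by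
      have hre2 : (s + 1 + 1).re = σ + 2 := by simp [hsdef]; ring
      have := norm_Gamma_le (s + 1 + 1) (by rw [hre2]; linarith)
      rw [hre2, h2, norm_mul, norm_mul] at this
      exact this
    have hy0 : (0:ℝ) < |y| := by linarith
    have hyne : y ≠ 0 := fun h => by simp [h] at hy0
    have hy2 : (0:ℝ) < y ^ 2 := by positivity
    rw [le_div_iff₀ hy2]
    have hprod : y ^ 2 ≤ ‖s + 1‖ * ‖s‖ := by
      have : y ^ 2 = |y| * |y| := by rw [← _root_.sq_abs y]; ring
      rw [this]
      exact mul_le_mul hs1abs hsabs hy0.le (norm_nonneg _)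
    calc ‖Complex.Gamma s‖ * y ^ 2 ≤ ‖Complex.Gamma s‖ * (‖s + 1‖ * ‖s‖) :=
        mul_le_mul_of_nonneg_left hprod (norm_nonneg _)
      _ = ‖s + 1‖ * (‖s‖ * ‖Complex.Gamma s‖) := by ring
      _ ≤ C := hnorm2
  have hC0 : 0 ≤ C := Real.Gamma_nonneg_of_nonneg (by linarith)
  have hK0 : 0 ≤ K := le_trans (norm_nonneg _) (hK 0 (by norm_num))
  set D : ℝ := 2 * max C K with hD
  have hD0 : 0 ≤ D := by positivity
  have hbound : ∀ y : ℝ, ‖Complex.Gamma ((σ:ℂ) + y * Complex.I)‖ ≤ D * (1 + y ^ 2)⁻¹ := by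
    intro y
    have h1y : (0:ℝ) < 1 + y ^ 2 := by positivity
    rw [← div_eq_mul_inv]
    rcases le_or_gt 1 |y| with hy | hy
    · have hyne : y ≠ 0 := fun h => by simp [h] at hy; linarith
      have hy2 : (0:ℝ) < y ^ 2 := by positivity
      refine (key y hy).trans ?_
      rw [div_le_div_iff₀ hy2 h1y]
      have h2 : 1 + y ^ 2 ≤ 2 * y ^ 2 := by nlinarith [_root_.sq_abs y, abs_nonneg y]
      have hCle : C ≤ max C K := le_max_left _ _
      nlinarith
    · have hmem : y ∈ Icc (-1:ℝ) 1 := abs_le.mp hy.le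
      refine (hK y hmem).trans ?_
      rw [le_div_iff₀ h1y]
      have h2 : 1 + y ^ 2 ≤ 2 := by nlinarith [_root_.sq_abs y, abs_nonneg y]
      have hKle : K ≤ max C K := le_max_right _ _
      nlinarith
  have hint : Integrable (fun y : ℝ => D * (1 + y ^ 2)⁻¹) :=
    integrable_inv_one_add_sq.const_mul D
  exact Integrable.mono' hint hcont.aestronglyMeasurable
    (Filter.Eventually.of_forall hbound)

-- Mellin inversion for exp, real σ
lemma gamma_inversion_real {σ : ℝ} (hσ : 0 < σ) {z : ℝ} (hz : 0 < z) :
    ∫ y : ℝ, (z : ℂ) ^ (-(y : ℂ) * Complex.I) * Complex.Gamma (σ + y * Complex.I)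
      = 2 * π * (z : ℂ) ^ (σ : ℂ) * Real.exp (-z) := by
  have hre : ∀ y : ℝ, 0 < ((σ : ℂ) + y * Complex.I).re := by
    intro y; simp [hσ]
  have hmel : ∀ y : ℝ, mellin (fun u : ℝ => (Real.exp (-u) : ℂ)) (σ + y * Complex.I)
      = Complex.Gamma (σ + y * Complex.I) := fun y => mellin_rexp _ (hre y)
  have hf : MellinConvergent (fun u : ℝ => (Real.exp (-u) : ℂ)) σ :=
    mellinConvergent_rexp _ (by simpa using hσ)
  have hFf : Complex.VerticalIntegrable (mellin (fun u : ℝ => (Real.exp (-u) : ℂ))) σ := by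
    refine (gamma_vert_integrable hσ).congr ?_
    exact Filter.Eventually.of_forall fun y => (hmel y).symm
  have hfx : ContinuousAt (fun u : ℝ => (Real.exp (-u) : ℂ)) z := by fun_prop
  have hinv := mellinInv_mellin_eq σ (fun u : ℝ => (Real.exp (-u) : ℂ)) hz hf hFf hfx
  rw [mellinInv] at hinv
  have hz0 : (z : ℂ) ≠ 0 := Complex.ofReal_ne_zero.mpr hz.ne'
  have hsplit : ∀ y : ℝ, (z : ℂ) ^ (-((σ : ℂ) + y * Complex.I))
      • mellin (fun u : ℝ => (Real.exp (-u) : ℂ)) (σ + y * Complex.I)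
      = (z : ℂ) ^ (-(σ:ℂ)) * ((z : ℂ) ^ (-(y:ℂ) * Complex.I)
          * Complex.Gamma (σ + y * Complex.I)) := by
    intro y
    rw [smul_eq_mul, hmel y, neg_add, Complex.cpow_add _ _ hz0, mul_assoc, neg_mul]
  simp_rw [hsplit] at hinv
  rw [integral_const_mul] at hinv
  have h2π : (2 * (π:ℝ)) ≠ 0 := by positivity
  have hzσ : (z : ℂ) ^ ((σ:ℂ)) ≠ 0 := by
    rw [Complex.cpow_def_of_ne_zero hz0]; exact Complex.exp_ne_zero _
  rw [Complex.cpow_neg, Complex.real_smul] at hinv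
  have h2πC : ((2 * π : ℝ) : ℂ) ≠ 0 := Complex.ofReal_ne_zero.mpr h2π
  field_simp at hinv
  push_cast at hinv ⊢
  simp_rw [neg_mul] at hinv ⊢
  rw [one_div, inv_mul_eq_iff_eq_mul₀ (by simpa using h2πC)] at hinv
  linear_combination hinv

lemma gamma_inversion (x₁ : ℂ) (hx₁ : 0 < x₁.re) {z : ℝ} (hz : 0 < z) :
    ∫ t : ℝ, (z : ℂ) ^ (-(t : ℂ) * Complex.I) * Complex.Gamma (x₁ + t * Complex.I)
      = 2 * π * (z : ℂ) ^ x₁ * Real.exp (-z) := by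
  set σ : ℝ := x₁.re with hσ
  set b : ℝ := x₁.im with hb
  have hz0 : (z : ℂ) ≠ 0 := Complex.ofReal_ne_zero.mpr hz.ne'
  have hx : ((σ : ℂ) + (b : ℂ) * Complex.I) = x₁ := Complex.re_add_im x₁
  have key := gamma_inversion_real (σ := σ) hx₁ hz
  have hstep : ∀ t : ℝ, (z : ℂ) ^ (-(t : ℂ) * Complex.I) * Complex.Gamma (x₁ + t * Complex.I)
      = (z : ℂ) ^ ((b : ℂ) * Complex.I) *
        ((z : ℂ) ^ (-((t + b : ℝ) : ℂ) * Complex.I) * Complex.Gamma (σ + (t + b : ℝ) * Complex.I)) := by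
    intro t
    have h1 : (z : ℂ) ^ ((b:ℂ) * Complex.I) * (z : ℂ) ^ (-((t + b : ℝ):ℂ) * Complex.I)
        = (z : ℂ) ^ (-(t:ℂ) * Complex.I) := by
      rw [← Complex.cpow_add _ _ hz0]
      congr 1
      push_cast
      ring
    have h2 : (σ : ℂ) + ((t + b : ℝ) : ℂ) * Complex.I = x₁ + t * Complex.I := by
      rw [← hx]; push_cast; ring
    rw [h2, ← mul_assoc, h1]
  simp_rw [hstep]
  rw [integral_const_mul]
  have hshift : ∫ t : ℝ, ((z : ℂ) ^ (-((t + b : ℝ) : ℂ) * Complex.I)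
      * Complex.Gamma (σ + (t + b : ℝ) * Complex.I))
      = ∫ y : ℝ, (z : ℂ) ^ (-(y : ℂ) * Complex.I) * Complex.Gamma (σ + y * Complex.I) := by
    exact integral_add_right_eq_self
      (fun y : ℝ => (z : ℂ) ^ (-(y : ℂ) * Complex.I) * Complex.Gamma (σ + y * Complex.I)) b
  rw [hshift, key, ← hx]
  rw [show ((σ:ℂ) + (b:ℂ) * Complex.I) = (σ:ℂ) + (b:ℂ) * Complex.I from rfl]
  rw [Complex.cpow_add _ _ hz0]
  ring

lemma gamma_vert_integrable_c (z : ℂ) (hz : 0 < z.re) :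
    Integrable (fun t : ℝ => Complex.Gamma (z + t * Complex.I)) := by
  have h := gamma_vert_integrable (σ := z.re) hz
  have hmp : MeasurePreserving (fun t : ℝ => t + z.im) volume volume :=
    measurePreserving_add_right volume z.im
  have hae : AEStronglyMeasurable (fun y : ℝ => Complex.Gamma ((z.re:ℂ) + y * Complex.I)) volume :=
    (gamma_vert_cont (z.re : ℂ) (by simpa using hz)).aestronglyMeasurable
  have h2 : Integrable ((fun y : ℝ => Complex.Gamma ((z.re:ℂ) + y * Complex.I)) ∘ (fun t : ℝ => t + z.im)) :=
    (hmp.integrable_comp hae).mpr h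
  refine h2.congr (Filter.Eventually.of_forall fun t => ?_)
  simp only [Function.comp_apply]
  congr 1
  conv_rhs => rw [← Complex.re_add_im z]
  push_cast
  ring

theorem stmt0 (x₁ x₂ : ℂ) (hx₁ : 0 < x₁.re) (hx₂ : 0 < x₂.re)
    (m n : ℝ) (hm : 0 < m) (hn : 0 < n) :
    (1 / ((m : ℂ) ^ x₁ * (n : ℂ) ^ x₂)) *
      ∫ t : ℝ, (m : ℂ) ^ (-(t : ℂ) * Complex.I) * (n : ℂ) ^ ((t : ℂ) * Complex.I) *
        Complex.Gamma (x₁ + t * Complex.I) * Complex.Gamma (x₂ - t * Complex.I)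
    = 2 * Real.pi * Complex.Gamma (x₁ + x₂) / ((m + n : ℝ) : ℂ) ^ (x₁ + x₂) := by
  have hm0 : (m:ℂ) ≠ 0 := Complex.ofReal_ne_zero.mpr hm.ne'
  have hn0 : (n:ℂ) ≠ 0 := Complex.ofReal_ne_zero.mpr hn.ne'
  have hmn : (0:ℝ) < m + n := by linarith
  have hmn0 : ((m+n:ℝ):ℂ) ≠ 0 := Complex.ofReal_ne_zero.mpr hmn.ne'
  set F : ℝ → ℝ → ℂ := fun t u =>
    (m:ℂ) ^ (-(t:ℂ) * Complex.I) * Complex.Gamma (x₁ + t * Complex.I) *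
      ((u:ℂ) ^ (x₂ - t * Complex.I - 1) * (Real.exp (-(n * u)) : ℂ)) with hFdef
  set μ : Measure (ℝ × ℝ) := volume.prod (volume.restrict (Set.Ioi (0:ℝ))) with hμdef
  -- Step 1: pointwise rewrite of the integrand
  have h1 : ∀ t : ℝ, (m : ℂ) ^ (-(t : ℂ) * Complex.I) * (n : ℂ) ^ ((t : ℂ) * Complex.I) *
        Complex.Gamma (x₁ + t * Complex.I) * Complex.Gamma (x₂ - t * Complex.I)
      = (n:ℂ) ^ x₂ * ∫ u in Set.Ioi (0:ℝ), F t u := by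
    intro t
    have hre : 0 < (x₂ - (t:ℂ) * Complex.I).re := by simp [hx₂]
    have hmel := mellin_rexp_mul n hn (x₂ - (t:ℂ) * Complex.I) hre
    rw [mellin] at hmel
    simp_rw [smul_eq_mul] at hmel
    have hint : (∫ u in Set.Ioi (0:ℝ), F t u)
        = ((m:ℂ) ^ (-(t:ℂ) * Complex.I) * Complex.Gamma (x₁ + t * Complex.I)) *
          ((n:ℂ) ^ (-(x₂ - (t:ℂ) * Complex.I)) * Complex.Gamma (x₂ - t * Complex.I)) := by
      rw [← hmel, ← integral_const_mul]
    rw [hint]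
    have hnn : (n:ℂ) ^ x₂ * (n:ℂ) ^ (-(x₂ - (t:ℂ) * Complex.I))
        = (n:ℂ) ^ ((t:ℂ) * Complex.I) := by
      rw [← Complex.cpow_add _ _ hn0]; congr 1; ring
    rw [← hnn]; ring
  simp_rw [h1]
  rw [integral_const_mul]
  -- Step 2: integrability on the product
  have hae_pos : ∀ᵐ p : ℝ × ℝ ∂μ, p.2 ∈ Set.Ioi (0:ℝ) := by
    have hμr : μ = (volume.prod volume).restrict (Set.univ ×ˢ Set.Ioi (0:ℝ)) := by
      rw [hμdef, ← Measure.prod_restrict, Measure.restrict_univ]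
    rw [hμr]
    filter_upwards [ae_restrict_mem (MeasurableSet.univ.prod measurableSet_Ioi)] with p hp
    exact hp.2
  have hcont1 : Continuous fun t : ℝ =>
      (m:ℂ) ^ (-(t:ℂ) * Complex.I) * Complex.Gamma (x₁ + t * Complex.I) := by
    apply Continuous.mul
    · exact Continuous.const_cpow (by fun_prop) (Or.inl hm0)
    · exact gamma_vert_cont x₁ hx₁
  have hGmeas : Measurable (fun p : ℝ × ℝ =>
      (m:ℂ) ^ (-(p.1:ℂ) * Complex.I) * Complex.Gamma (x₁ + p.1 * Complex.I) *
        (Complex.exp ((Real.log p.2 : ℂ) * (x₂ - p.1 * Complex.I - 1)) *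
          (Real.exp (-(n * p.2)) : ℂ))) := by
    apply Measurable.mul
    · exact (hcont1.comp continuous_fst).measurable
    · apply Measurable.mul
      · apply Complex.measurable_exp.comp
        apply Measurable.mul
        · exact Complex.measurable_ofReal.comp (Real.measurable_log.comp measurable_snd)
        · exact (Continuous.measurable (by fun_prop))
      · exact (Complex.continuous_ofReal.comp (by fun_prop)).measurable
  have hFmeas : AEStronglyMeasurable (Function.uncurry F) μ := by
    refine hGmeas.aestronglyMeasurable.congr ?_
    filter_upwards [hae_pos] with p hp
    have hp0 : (0:ℝ) < p.2 := hp
    have hpC : (p.2:ℂ) ≠ 0 := Complex.ofReal_ne_zero.mpr hp0.ne'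
    have : ((p.2:ℝ):ℂ) ^ (x₂ - p.1 * Complex.I - 1)
        = Complex.exp ((Real.log p.2 : ℂ) * (x₂ - p.1 * Complex.I - 1)) := by
      rw [Complex.cpow_def_of_ne_zero hpC, Complex.ofReal_log hp0.le]
    simp only [Function.uncurry, hFdef]
    rw [this]
  have hGam_int : Integrable (fun t : ℝ => ‖Complex.Gamma (x₁ + t * Complex.I)‖) :=
    (gamma_vert_integrable_c x₁ hx₁).norm
  have hg_int : Integrable (fun u : ℝ =>
      ‖(u:ℂ) ^ (x₂ - 1) * (Real.exp (-(n * u)) : ℂ)‖) (volume.restrict (Set.Ioi (0:ℝ))) := by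
    have := (mellinConvergent_rexp_mul n hn x₂ hx₂).norm
    refine this.congr ?_
    filter_upwards with u
    simp [smul_eq_mul]
  have hB_int : Integrable (fun p : ℝ × ℝ => ‖Complex.Gamma (x₁ + p.1 * Complex.I)‖ *
      ‖(p.2:ℂ) ^ (x₂ - 1) * (Real.exp (-(n * p.2)) : ℂ)‖) μ :=
    Integrable.mul_prod hGam_int hg_int
  have hF_int : Integrable (Function.uncurry F) μ := by
    refine hB_int.mono' hFmeas ?_
    filter_upwards [hae_pos] with p hp
    have hp0 : (0:ℝ) < p.2 := hp
    have e1 : ‖(m:ℂ) ^ (-(p.1:ℂ) * Complex.I)‖ = 1 := by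
      rw [Complex.norm_cpow_eq_rpow_re_of_pos hm]
      simp
    have e2 : ‖(p.2:ℂ) ^ (x₂ - p.1 * Complex.I - 1)‖
        = ‖(p.2:ℂ) ^ (x₂ - 1)‖ := by
      rw [Complex.norm_cpow_eq_rpow_re_of_pos hp0, Complex.norm_cpow_eq_rpow_re_of_pos hp0]
      congr 1
      simp
    refine le_of_eq ?_
    simp only [Function.uncurry, hFdef]
    rw [norm_mul, norm_mul, norm_mul, norm_mul]
    rw [e1, e2]
    ring
  -- Step 3: Fubini
  rw [MeasureTheory.integral_integral_swap hF_int]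
  -- Step 4: compute the inner integral
  have h2 : ∀ u ∈ Set.Ioi (0:ℝ), (∫ t : ℝ, F t u)
      = (2 * (Real.pi:ℂ) * (m:ℂ) ^ x₁) *
        ((u:ℂ) ^ (x₁ + x₂ - 1) * (Real.exp (-((m+n) * u)) : ℂ)) := by
    intro u hu
    have hu0 : (0:ℝ) < u := hu
    have huC : (u:ℂ) ≠ 0 := Complex.ofReal_ne_zero.mpr hu0.ne'
    have hsplit : ∀ t : ℝ, F t u
        = ((m*u : ℝ):ℂ) ^ (-(t:ℂ) * Complex.I) * Complex.Gamma (x₁ + t * Complex.I) *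
          ((u:ℂ) ^ (x₂ - 1) * (Real.exp (-(n * u)) : ℂ)) := by
      intro t
      have e1 : (u:ℂ) ^ (x₂ - (t:ℂ) * Complex.I - 1)
          = (u:ℂ) ^ (-(t:ℂ) * Complex.I) * (u:ℂ) ^ (x₂ - 1) := by
        rw [← Complex.cpow_add _ _ huC]; congr 1; ring
      have e2 : ((m*u:ℝ):ℂ) ^ (-(t:ℂ) * Complex.I)
          = (m:ℂ) ^ (-(t:ℂ) * Complex.I) * (u:ℂ) ^ (-(t:ℂ) * Complex.I) := by
        push_cast
        exact mul_cpow_ofReal_nonneg hm.le hu0.le _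
      simp only [hFdef]
      rw [e1, e2]; ring
    simp_rw [hsplit]
    rw [integral_mul_const]
    rw [gamma_inversion x₁ hx₁ (mul_pos hm hu0)]
    have e3 : ((m*u:ℝ):ℂ) ^ x₁ = (m:ℂ) ^ x₁ * (u:ℂ) ^ x₁ := by
      push_cast; exact mul_cpow_ofReal_nonneg hm.le hu0.le _
    have e4 : (u:ℂ) ^ x₁ * (u:ℂ) ^ (x₂ - 1) = (u:ℂ) ^ (x₁ + x₂ - 1) := by
      rw [← Complex.cpow_add _ _ huC]; congr 1; ring
    have e5 : (Real.exp (-(m*u)) : ℂ) * (Real.exp (-(n*u)) : ℂ)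
        = (Real.exp (-((m+n)*u)) : ℂ) := by
      norm_cast
      rw [← Real.exp_add]
      congr 1; ring
    calc 2 * (Real.pi:ℂ) * ((m*u:ℝ):ℂ) ^ x₁ * (Real.exp (-(m*u)) : ℂ) *
          ((u:ℂ) ^ (x₂ - 1) * (Real.exp (-(n * u)) : ℂ))
        = 2 * (Real.pi:ℂ) * (m:ℂ) ^ x₁ * (((u:ℂ) ^ x₁ * (u:ℂ) ^ (x₂-1)) *
            ((Real.exp (-(m*u)) : ℂ) * (Real.exp (-(n*u)) : ℂ))) := by rw [e3]; ring
      _ = (2 * (Real.pi:ℂ) * (m:ℂ) ^ x₁) *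
            ((u:ℂ) ^ (x₁ + x₂ - 1) * (Real.exp (-((m+n) * u)) : ℂ)) := by rw [e4, e5]
  rw [setIntegral_congr_fun measurableSet_Ioi h2]
  rw [integral_const_mul]
  -- Step 5: the remaining integral is a Gamma integral
  have hre12 : 0 < (x₁ + x₂).re := by
    rw [Complex.add_re]; linarith
  have hmel2 := mellin_rexp_mul (m+n) hmn (x₁ + x₂) hre12
  rw [mellin] at hmel2
  simp_rw [smul_eq_mul] at hmel2
  have : (∫ u in Set.Ioi (0:ℝ), (u:ℂ) ^ (x₁ + x₂ - 1) * (Real.exp (-((m+n) * u)) : ℂ))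
      = ((m+n:ℝ):ℂ) ^ (-(x₁+x₂)) * Complex.Gamma (x₁ + x₂) := hmel2
  rw [this]
  -- Step 6: final algebra
  have hmx : (m:ℂ) ^ x₁ ≠ 0 := by
    rw [Complex.cpow_def_of_ne_zero hm0]; exact Complex.exp_ne_zero _
  have hnx : (n:ℂ) ^ x₂ ≠ 0 := by
    rw [Complex.cpow_def_of_ne_zero hn0]; exact Complex.exp_ne_zero _
  have hmnx : ((m+n:ℝ):ℂ) ^ (x₁+x₂) ≠ 0 := by
    rw [Complex.cpow_def_of_ne_zero hmn0]; exact Complex.exp_ne_zero _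
  rw [Complex.cpow_neg]
  have hmnx2 : ((m:ℂ) + n) ^ (x₁+x₂) ≠ 0 := by push_cast at hmnx; exact hmnx
  field_simp [hmx, hnx, hmnx2]
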